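/- Let q be odd, G = SL_2(F_q), n = p_1^{r_1}···p_s^{r_s} ∈ A = F_q[T] with distinct monic irreducible factors, and let G act diagonally on P^1(A/n) ≅ ∏_i P^1(A/p_i^{r_i}). Suppose z = (z_1,…,z_s) satisfies: there is a nontrivial partition S ⊔ S' = {1,…,s} and distinct points u ≠ v in P^1(F_q) with z_i = u for i ∈ S and z_i = v for i ∈ S'. Then Stab_G(z) is isomorphic to F_q^× (the diagonal torus), the G-orbit of z has length q(q+1), and the total number of such G-orbits is 2^{s−1} − 1. -/

import Mathlib

open Matrix Polynomial

section P1
variable (R : Type*) [CommRing R]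

/-- Unimodular pairs over `R`. -/
def Unimod := {p : R × R // IsCoprime p.1 p.2}

/-- Unit-scaling relation on unimodular pairs. -/
def P1Rel : Unimod R → Unimod R → Prop := fun p q =>
  ∃ u : Rˣ, (u : R) * p.1.1 = q.1.1 ∧ (u : R) * p.1.2 = q.1.2

/-- The projective line over a commutative ring. -/
def P1 := Quot (P1Rel R)

variable {R}

/-- Class of a unimodular pair. -/
def P1.mk (p : R × R) (h : IsCoprime p.1 p.2) : P1 R := Quot.mk _ ⟨p, h⟩

/-- Fractional-linear action of `SL₂` on unimodular pairs. -/
def actPair (g : SpecialLinearGroup (Fin 2) R) (p : Unimod R) : Unimod R :=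
  ⟨((g : Matrix (Fin 2) (Fin 2) R) 0 0 * p.1.1 + (g : Matrix (Fin 2) (Fin 2) R) 0 1 * p.1.2,
    (g : Matrix (Fin 2) (Fin 2) R) 1 0 * p.1.1 + (g : Matrix (Fin 2) (Fin 2) R) 1 1 * p.1.2), by
    obtain ⟨a, b, hab⟩ := p.2
    have hdet : (g : Matrix (Fin 2) (Fin 2) R) 0 0 * (g : Matrix (Fin 2) (Fin 2) R) 1 1
        - (g : Matrix (Fin 2) (Fin 2) R) 0 1 * (g : Matrix (Fin 2) (Fin 2) R) 1 0 = 1 := by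
      have h := g.2
      rwa [Matrix.det_fin_two] at h
    exact ⟨a * (g : Matrix (Fin 2) (Fin 2) R) 1 1 - b * (g : Matrix (Fin 2) (Fin 2) R) 1 0,
      b * (g : Matrix (Fin 2) (Fin 2) R) 0 0 - a * (g : Matrix (Fin 2) (Fin 2) R) 0 1, by
      linear_combination (a * p.1.1 + b * p.1.2) * hdet + hab⟩⟩

/-- Fractional-linear action of `SL₂` on the projective line. -/
def actP1 (g : SpecialLinearGroup (Fin 2) R) : P1 R → P1 R :=
  Quot.map (actPair g) (by
    rintro ⟨⟨u, v⟩, hc⟩ ⟨⟨u', v'⟩, hc'⟩ ⟨t, h1, h2⟩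
    refine ⟨t, ?_, ?_⟩ <;> show (t : R) * _ = _ <;> dsimp [actPair]
    · linear_combination (g : Matrix (Fin 2) (Fin 2) R) 0 0 * h1
        + (g : Matrix (Fin 2) (Fin 2) R) 0 1 * h2
    · linear_combination (g : Matrix (Fin 2) (Fin 2) R) 1 0 * h1
        + (g : Matrix (Fin 2) (Fin 2) R) 1 1 * h2)

lemma actP1_one (z : P1 R) : actP1 (1 : SpecialLinearGroup (Fin 2) R) z = z := by
  induction z using Quot.ind with
  | _ p =>
    show Quot.mk _ (actPair 1 p) = Quot.mk _ p
    congr 1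
    apply Subtype.ext
    apply Prod.ext <;> simp [actPair, Matrix.one_apply]

lemma actP1_mul (g h : SpecialLinearGroup (Fin 2) R) (z : P1 R) :
    actP1 (g * h) z = actP1 g (actP1 h z) := by
  induction z using Quot.ind with
  | _ p =>
    show Quot.mk _ (actPair (g * h) p) = Quot.mk _ (actPair g (actPair h p))
    congr 1
    apply Subtype.ext
    apply Prod.ext <;>
      simp [actPair, Matrix.mul_apply, Fin.sum_univ_two] <;> ring

/-- The map on projective lines induced by a ring homomorphism. -/
def P1map {S : Type*} [CommRing S] (f : R →+* S) : P1 R → P1 S :=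
  Quot.map (fun p => ⟨(f p.1.1, f p.1.2), p.2.map f⟩) (by
    rintro ⟨⟨u, v⟩, hc⟩ ⟨⟨u', v'⟩, hc'⟩ ⟨t, h1, h2⟩
    refine ⟨Units.map (f : R →* S) t, ?_, ?_⟩ <;>
      simp only [Units.coe_map, MonoidHom.coe_coe, ← _root_.map_mul]
    · exact congrArg f h1
    · exact congrArg f h2)

/-- The stabilizer of a point of `P1 R` in a group acting through `SL₂(R)`. -/
def stabSub {G : Type*} [Group G] (φ : G →* SpecialLinearGroup (Fin 2) R) (z : P1 R) :
    Subgroup G where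
  carrier := {g | actP1 (φ g) z = z}
  one_mem' := by simp [actP1_one]
  mul_mem' := by
    intro g h hg hh
    simp only [Set.mem_setOf_eq] at *
    rw [_root_.map_mul, actP1_mul, hh, hg]
  inv_mem' := by
    intro g hg
    simp only [Set.mem_setOf_eq] at *
    conv_lhs => rw [← hg]
    rw [← actP1_mul, ← _root_.map_mul, inv_mul_cancel, _root_.map_one, actP1_one]

end P1

variable {Fq : Type*} [Field Fq] [Fintype Fq]

/-- The embedding of constants `Fq → Fq[T]/(m)`. -/
noncomputable def constMap (Fq : Type*) [Field Fq] (m : Polynomial Fq) :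
    Fq →+* Polynomial Fq ⧸ Ideal.span {m} :=
  (Ideal.Quotient.mk (Ideal.span {m})).comp Polynomial.C

/-- A tuple `z ∈ ∏ᵢ P¹(A/pᵢ^{rᵢ})` is of "split rational type": there is a nontrivial
partition `S ⊔ Sᶜ` of the factors and distinct `u ≠ v ∈ P¹(Fq)` with `zᵢ = u` on `S`
and `zᵢ = v` on `Sᶜ`. -/
def SplitRational {s : ℕ} (p : Fin s → Polynomial Fq) (r : Fin s → ℕ)
    (z : ∀ i, P1 (Polynomial Fq ⧸ Ideal.span {p i ^ r i})) : Prop :=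
  ∃ S : Set (Fin s), S.Nonempty ∧ Sᶜ.Nonempty ∧
    ∃ u v : P1 Fq, u ≠ v ∧
      (∀ i ∈ S, z i = P1map (constMap Fq (p i ^ r i)) u) ∧
      (∀ i ∈ Sᶜ, z i = P1map (constMap Fq (p i ^ r i)) v)

section Infra

lemma p1rel_equiv (R : Type*) [CommRing R] : Equivalence (P1Rel R) where
  refl p := ⟨1, by simp, by simp⟩
  symm := by
    rintro p q ⟨u, h1, h2⟩
    exact ⟨u⁻¹, by rw [← h1, Units.inv_mul_cancel_left],
      by rw [← h2, Units.inv_mul_cancel_left]⟩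
  trans := by
    rintro x y w ⟨u, h1, h2⟩ ⟨v, k1, k2⟩
    exact ⟨v * u, by rw [Units.val_mul, mul_assoc, h1, k1],
      by rw [Units.val_mul, mul_assoc, h2, k2]⟩

lemma cross_of_mk_eq {R : Type*} [CommRing R] {a b c d : R} (h1 : IsCoprime a b)
    (h2 : IsCoprime c d) (h : P1.mk (a, b) h1 = P1.mk (c, d) h2) : a * d = b * c := by
  obtain ⟨u, hu1, hu2⟩ := (p1rel_equiv R).eqvGen_iff.mp (Quot.eqvGen_exact h)
  have h1' : (u : R) * a = c := hu1
  have h2' : (u : R) * b = d := hu2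
  linear_combination b * h1' - a * h2'

lemma P1.mk_congr {R : Type*} [CommRing R] {x y : R × R} (h : x = y)
    (h1 : IsCoprime x.1 x.2) (h2 : IsCoprime y.1 y.2) : P1.mk x h1 = P1.mk y h2 := by
  subst h; rfl

lemma P1.ind' {R : Type*} [CommRing R] {motive : P1 R → Prop}
    (h : ∀ (a b : R) (hab : IsCoprime a b), motive (P1.mk (a, b) hab)) : ∀ z, motive z := by
  intro z
  induction z using Quot.ind with
  | _ q => obtain ⟨⟨a, b⟩, hq⟩ := q; exact h a b hq

variable {K : Type*} [Field K]

lemma not_both_zero {a b : K} (h : IsCoprime a b) : ¬ (a = 0 ∧ b = 0) := by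
  rintro ⟨rfl, rfl⟩
  obtain ⟨x, y, e⟩ := h
  simp at e

lemma mk_eq_mk_iff {a b c d : K} (h1 : IsCoprime a b) (h2 : IsCoprime c d) :
    P1.mk (a, b) h1 = P1.mk (c, d) h2 ↔ a * d = b * c := by
  refine ⟨cross_of_mk_eq h1 h2, fun h => Quot.sound ?_⟩
  rcases eq_or_ne a 0 with rfl | ha
  · have hb : b ≠ 0 := fun hb => not_both_zero h1 ⟨rfl, hb⟩
    have hc : c = 0 := by
      rcases mul_eq_zero.mp (show b * c = 0 by linear_combination -h) with h' | h'
      · exact absurd h' hb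
      · exact h'
    have hd : d ≠ 0 := fun hd => not_both_zero h2 ⟨hc, hd⟩
    refine ⟨Units.mk0 (d / b) (div_ne_zero hd hb), ?_, ?_⟩
    · show d / b * 0 = c; rw [mul_zero, hc]
    · show d / b * b = d; field_simp
  · have hc : c ≠ 0 := by
      intro hc
      have hd : d = 0 := by
        rcases mul_eq_zero.mp (show a * d = 0 by rw [h, hc, mul_zero]) with h' | h'
        · exact absurd h' ha
        · exact h'
      exact not_both_zero h2 ⟨hc, hd⟩
    refine ⟨Units.mk0 (c / a) (div_ne_zero hc ha), ?_, ?_⟩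
    · show c / a * a = c; field_simp
    · show c / a * b = d; field_simp; linear_combination -h

lemma actP1_mk {R : Type*} [CommRing R] (g : SpecialLinearGroup (Fin 2) R) (a b : R)
    (h : IsCoprime a b) :
    actP1 g (P1.mk (a, b) h) =
      P1.mk ((g : Matrix (Fin 2) (Fin 2) R) 0 0 * a + (g : Matrix (Fin 2) (Fin 2) R) 0 1 * b,
        (g : Matrix (Fin 2) (Fin 2) R) 1 0 * a + (g : Matrix (Fin 2) (Fin 2) R) 1 1 * b)
        (actPair g ⟨(a, b), h⟩).2 := rfl

lemma P1map_mk {R S : Type*} [CommRing R] [CommRing S] (f : R →+* S) (a b : R)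
    (h : IsCoprime a b) :
    P1map f (P1.mk (a, b) h) = P1.mk (f a, f b) (h.map f) := rfl

lemma actP1_inv_act {R : Type*} [CommRing R] (g : SpecialLinearGroup (Fin 2) R) (z : P1 R) :
    actP1 g⁻¹ (actP1 g z) = z := by
  rw [← actP1_mul, inv_mul_cancel, actP1_one]

lemma actP1_injective {R : Type*} [CommRing R] (g : SpecialLinearGroup (Fin 2) R) :
    Function.Injective (actP1 (R := R) g) := fun x y h => by
  rw [← actP1_inv_act g x, h, actP1_inv_act]

lemma actP1_map_comm {R S : Type*} [CommRing R] [CommRing S] (f : R →+* S)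
    (g : SpecialLinearGroup (Fin 2) R) (x : P1 R) :
    actP1 (SpecialLinearGroup.map f g) (P1map f x) = P1map f (actP1 g x) := by
  induction x using P1.ind' with
  | h a b hab =>
    simp only [P1map_mk, actP1_mk]
    apply P1.mk_congr
    have e : ∀ i j, ((SpecialLinearGroup.map f g : SpecialLinearGroup (Fin 2) S) :
        Matrix (Fin 2) (Fin 2) S) i j = f ((g : Matrix (Fin 2) (Fin 2) R) i j) := by
      intro i j
      simp [SpecialLinearGroup.map_apply_coe, RingHom.mapMatrix_apply, Matrix.map_apply]
    simp only [e, Prod.mk.injEq, _root_.map_mul, map_add]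

end Infra
section Infra2
variable {K : Type*} [Field K]

/-- The point at infinity. -/
def P1inf (K : Type*) [CommRing K] : P1 K := P1.mk (1, 0) isCoprime_one_left

/-- The origin. -/
def P1zero (K : Type*) [CommRing K] : P1 K := P1.mk (0, 1) isCoprime_one_right

lemma P1inf_ne_zero : P1inf K ≠ P1zero K := by
  unfold P1inf P1zero
  rw [Ne, mk_eq_mk_iff]
  simp

lemma fix_infzero_iff (g : SpecialLinearGroup (Fin 2) K) :
    (actP1 g (P1inf K) = P1inf K ∧ actP1 g (P1zero K) = P1zero K) ↔
      (g : Matrix (Fin 2) (Fin 2) K) 1 0 = 0 ∧ (g : Matrix (Fin 2) (Fin 2) K) 0 1 = 0 := by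
  unfold P1inf P1zero
  rw [actP1_mk, actP1_mk]
  erw [mk_eq_mk_iff, mk_eq_mk_iff]
  constructor
  · rintro ⟨e1, e2⟩
    exact ⟨by linear_combination -e1, by linear_combination e2⟩
  · rintro ⟨e1, e2⟩
    exact ⟨by linear_combination -e1, by linear_combination e2⟩

lemma exists_to_infzero {u v : P1 K} (h : u ≠ v) :
    ∃ g : SpecialLinearGroup (Fin 2) K, actP1 g u = P1inf K ∧ actP1 g v = P1zero K := by
  induction u using P1.ind' with
  | h a b hab =>
  induction v using P1.ind' with
  | h c d hcd =>
  have hD : a * d - b * c ≠ 0 := fun h0 =>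
    h ((mk_eq_mk_iff hab hcd).mpr (by linear_combination h0))
  set D := a * d - b * c with hDdef
  refine ⟨⟨!![d, -c; -b / D, a / D], by
    rw [Matrix.det_fin_two_of]; field_simp; ring⟩, ?_, ?_⟩
  · erw [actP1_mk]
    unfold P1inf
    erw [mk_eq_mk_iff]
    simp only [Matrix.SpecialLinearGroup.coe_mk]
    norm_num [Matrix.cons_val_zero, Matrix.cons_val_one, Matrix.head_cons]
    field_simp
    ring
  · erw [actP1_mk]
    unfold P1zero
    erw [mk_eq_mk_iff]
    simp only [Matrix.SpecialLinearGroup.coe_mk]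
    norm_num [Matrix.cons_val_zero, Matrix.cons_val_one, Matrix.head_cons]
    try ring

lemma exists_pair_trans {u v x y : P1 K} (huv : u ≠ v) (hxy : x ≠ y) :
    ∃ g : SpecialLinearGroup (Fin 2) K, actP1 g u = x ∧ actP1 g v = y := by
  obtain ⟨k, hk1, hk2⟩ := exists_to_infzero huv
  obtain ⟨l, hl1, hl2⟩ := exists_to_infzero hxy
  refine ⟨l⁻¹ * k, ?_, ?_⟩
  · rw [actP1_mul, hk1, ← hl1, actP1_inv_act]
  · rw [actP1_mul, hk2, ← hl2, actP1_inv_act]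

/-- Diagonal element of `SL₂`. -/
def diagSL (a : Kˣ) : SpecialLinearGroup (Fin 2) K :=
  ⟨!![(a : K), 0; 0, ((a⁻¹ : Kˣ) : K)], by
    rw [Matrix.det_fin_two_of]; simp⟩

lemma diagSL_offdiag (a : Kˣ) :
    ((diagSL a : SpecialLinearGroup (Fin 2) K) : Matrix (Fin 2) (Fin 2) K) 1 0 = 0 ∧
    ((diagSL a : SpecialLinearGroup (Fin 2) K) : Matrix (Fin 2) (Fin 2) K) 0 1 = 0 := by
  constructor <;> simp [diagSL]

lemma P1map_constMap_injective {m : Polynomial K} (hm : ¬ IsUnit m) :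
    Function.Injective (P1map (constMap K m) : P1 K → P1 (Polynomial K ⧸ Ideal.span {m})) := by
  intro u v h
  induction u using P1.ind' with
  | h a b hab =>
  induction v using P1.ind' with
  | h c d hcd =>
  rw [P1map_mk, P1map_mk] at h
  have h2 := cross_of_mk_eq _ _ h
  rw [← _root_.map_mul, ← _root_.map_mul] at h2
  have h3 : constMap K m (a * d - b * c) = 0 := by rw [map_sub, h2, sub_self]
  have h4 : (C (a * d - b * c) : Polynomial K) ∈ Ideal.span {m} := by
    rwa [constMap, RingHom.comp_apply, Ideal.Quotient.eq_zero_iff_mem] at h3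
  rw [Ideal.mem_span_singleton] at h4
  have h5 : a * d - b * c = 0 := by
    by_contra hne
    exact hm (isUnit_of_dvd_unit h4 (Polynomial.isUnit_C.mpr (isUnit_iff_ne_zero.mpr hne)))
  exact (mk_eq_mk_iff hab hcd).mpr (by linear_combination h5)

instance (R : Type*) [CommRing R] : Nonempty (P1 R) := ⟨P1inf R⟩

/-- Retraction for `P1map (constMap K m)`. -/
noncomputable def rho (K : Type*) [Field K] (m : Polynomial K) :
    P1 (Polynomial K ⧸ Ideal.span {m}) → P1 K :=
  Function.invFun (P1map (constMap K m))

lemma rho_map {m : Polynomial K} (hm : ¬ IsUnit m) (x : P1 K) :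
    rho K m (P1map (constMap K m) x) = x :=
  Function.leftInverse_invFun (P1map_constMap_injective hm) x

end Infra2
section Infra3
variable {K : Type*} [Field K]

open scoped Classical in
/-- The projective line over a field is `Option K`. -/
noncomputable def P1EquivOption (K : Type*) [Field K] : P1 K ≃ Option K where
  toFun := Quot.lift (fun q => if q.1.2 = 0 then none else some (q.1.1 / q.1.2)) (by
    rintro ⟨⟨a, b⟩, h⟩ ⟨⟨c, d⟩, h'⟩ ⟨t, h1, h2⟩
    have h1' : (t : K) * a = c := h1
    have h2' : (t : K) * b = d := h2
    dsimp only
    by_cases hb : b = 0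
    · rw [if_pos hb, if_pos (by rw [← h2', hb, mul_zero])]
    · rw [if_neg hb, if_neg (by rw [← h2']; exact mul_ne_zero t.ne_zero hb), ← h1', ← h2',
        mul_div_mul_left _ _ t.ne_zero])
  invFun := fun o => o.elim (P1inf K) (fun x => P1.mk (x, 1) isCoprime_one_right)
  left_inv := by
    intro z
    induction z using P1.ind' with
    | h a b hab =>
    show Option.elim (if b = 0 then none else some (a / b)) _ _ = _
    by_cases hb : b = 0
    · rw [if_pos hb]
      subst hb
      show P1inf K = _
      unfold P1inf
      rw [mk_eq_mk_iff]
      ring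
    · rw [if_neg hb]
      show P1.mk (a / b, 1) _ = _
      rw [mk_eq_mk_iff]
      field_simp
  right_inv := by
    intro o
    cases o with
    | none => show (if (0 : K) = 0 then none else _) = none; rw [if_pos rfl]
    | some x =>
      show (if (1 : K) = 0 then none else some (x / 1)) = some x
      rw [if_neg one_ne_zero, div_one]

instance (K : Type*) [Field K] [Finite K] : Finite (P1 K) := by
  have := Fintype.ofFinite K
  exact Finite.of_equiv _ (P1EquivOption K).symm

lemma card_P1 (K : Type*) [Field K] [Fintype K] : Nat.card (P1 K) = Fintype.card K + 1 := by
  rw [Nat.card_congr (P1EquivOption K), Nat.card_eq_fintype_card, Fintype.card_option]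

lemma card_ne_pairs {α : Type*} [Finite α] :
    Nat.card {q : α × α // q.1 ≠ q.2} = Nat.card α * Nat.card α - Nat.card α := by
  classical
  have := Fintype.ofFinite α
  have e : {q : α × α // q.1 ≠ q.2} ≃ {q : α × α // q ∈ Finset.univ.offDiag} :=
    Equiv.subtypeEquivRight (by intro q; simp [Finset.mem_offDiag])
  rw [Nat.card_congr e, Nat.card_eq_fintype_card, Fintype.card_coe, Finset.offDiag_card,
    Finset.card_univ, Nat.card_eq_fintype_card]

lemma card_subtype_ne {β : Type*} [Finite β] (a : β) :
    Nat.card {x : β // x ≠ a} = Nat.card β - 1 := by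
  classical
  have := Fintype.ofFinite β
  rw [Nat.card_eq_fintype_card, Nat.card_eq_fintype_card]
  calc Fintype.card {x : β // x ≠ a} = Fintype.card {x : β // ¬ x = a} := rfl
    _ = Fintype.card β - 1 := by
        rw [Fintype.card_subtype_compl, Fintype.card_subtype_eq]

lemma card_set_ne_univ {β : Type*} [Finite β] :
    Nat.card {T : Set β // T ≠ Set.univ} = 2 ^ Nat.card β - 1 := by
  classical
  have := Fintype.ofFinite β
  have e : Set β ≃ (β → Bool) := Equiv.arrowCongr (Equiv.refl β) Equiv.propEquivBool
  have : Finite (Set β) := Finite.of_equiv _ e.symm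
  have hcard : Nat.card (Set β) = 2 ^ Nat.card β := by
    rw [Nat.card_congr e, Nat.card_eq_fintype_card, Fintype.card_fun, Fintype.card_bool,
      Nat.card_eq_fintype_card]
  rw [card_subtype_ne (Set.univ : Set β), hcard]

end Infra3
section Infra4
variable {K : Type*} [Field K]

lemma mem_stabSub {R G : Type*} [CommRing R] [Group G]
    (φ : G →* SpecialLinearGroup (Fin 2) R) (z : P1 R) (g : G) :
    g ∈ stabSub φ z ↔ actP1 (φ g) z = z := Iff.rfl

lemma sl2_det (x : SpecialLinearGroup (Fin 2) K) :
    (x : Matrix (Fin 2) (Fin 2) K) 0 0 * (x : Matrix (Fin 2) (Fin 2) K) 1 1 -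
      (x : Matrix (Fin 2) (Fin 2) K) 0 1 * (x : Matrix (Fin 2) (Fin 2) K) 1 0 = 1 := by
  have h := x.2
  rwa [Matrix.det_fin_two] at h

lemma mul_entry00 (x y : SpecialLinearGroup (Fin 2) K)
    (hx : (x : Matrix (Fin 2) (Fin 2) K) 0 1 = 0) :
    ((x * y : SpecialLinearGroup (Fin 2) K) : Matrix (Fin 2) (Fin 2) K) 0 0 =
      (x : Matrix (Fin 2) (Fin 2) K) 0 0 * (y : Matrix (Fin 2) (Fin 2) K) 0 0 := by
  rw [Matrix.SpecialLinearGroup.coe_mul, Matrix.mul_apply, Fin.sum_univ_two, hx, zero_mul,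
    add_zero]

set_option maxHeartbeats 1000000 in
/-- The stabilizer of two distinct points of `P1 K` is isomorphic to `Kˣ`. -/
noncomputable def stabEquivUnits {u v : P1 K}
    (H : Subgroup (SpecialLinearGroup (Fin 2) K)) (g0 : SpecialLinearGroup (Fin 2) K)
    (hg0u : actP1 g0 u = P1inf K) (hg0v : actP1 g0 v = P1zero K)
    (hmem : ∀ g, g ∈ H ↔ (actP1 g u = u ∧ actP1 g v = v)) : H ≃* Kˣ := by
  have hu' : actP1 g0⁻¹ (P1inf K) = u := by rw [← hg0u, actP1_inv_act]
  have hv' : actP1 g0⁻¹ (P1zero K) = v := by rw [← hg0v, actP1_inv_act]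
  have hfix : ∀ g : SpecialLinearGroup (Fin 2) K, g ∈ H ↔
      (((g0 * g * g0⁻¹ : SpecialLinearGroup (Fin 2) K) : Matrix (Fin 2) (Fin 2) K) 1 0 = 0 ∧
       ((g0 * g * g0⁻¹ : SpecialLinearGroup (Fin 2) K) : Matrix (Fin 2) (Fin 2) K) 0 1 = 0) := by
    intro g
    rw [hmem, ← fix_infzero_iff]
    constructor
    · rintro ⟨h1, h2⟩
      constructor
      · rw [actP1_mul, actP1_mul, hu', h1, hg0u]
      · rw [actP1_mul, actP1_mul, hv', h2, hg0v]
    · rintro ⟨h1, h2⟩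
      constructor
      · rw [← hu', ← actP1_mul]
        have e : g * g0⁻¹ = g0⁻¹ * (g0 * g * g0⁻¹) := by group
        rw [e, actP1_mul, h1, hu']
      · rw [← hv', ← actP1_mul]
        have e : g * g0⁻¹ = g0⁻¹ * (g0 * g * g0⁻¹) := by group
        rw [e, actP1_mul, h2, hv']
  exact
  { toFun := fun g =>
      ⟨((g0 * (g : SpecialLinearGroup (Fin 2) K) * g0⁻¹ :
          SpecialLinearGroup (Fin 2) K) : Matrix (Fin 2) (Fin 2) K) 0 0,
        ((g0 * (g : SpecialLinearGroup (Fin 2) K) * g0⁻¹ :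
          SpecialLinearGroup (Fin 2) K) : Matrix (Fin 2) (Fin 2) K) 1 1,
        by
          have hd := sl2_det (g0 * (g : SpecialLinearGroup (Fin 2) K) * g0⁻¹)
          have h2 := (hfix g).mp g.2
          linear_combination hd + ((g0 * (g : SpecialLinearGroup (Fin 2) K) * g0⁻¹ :
            SpecialLinearGroup (Fin 2) K) : Matrix (Fin 2) (Fin 2) K) 1 0 * h2.2,
        by
          have hd := sl2_det (g0 * (g : SpecialLinearGroup (Fin 2) K) * g0⁻¹)
          have h2 := (hfix g).mp g.2
          linear_combination hd + ((g0 * (g : SpecialLinearGroup (Fin 2) K) * g0⁻¹ :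
            SpecialLinearGroup (Fin 2) K) : Matrix (Fin 2) (Fin 2) K) 1 0 * h2.2⟩,
    invFun := fun a =>
      ⟨g0⁻¹ * diagSL a * g0, by
        rw [hfix]
        have e : g0 * (g0⁻¹ * diagSL a * g0) * g0⁻¹ = diagSL a := by group
        rw [e]
        exact diagSL_offdiag a⟩,
    left_inv := by
      intro g
      have h2 := (hfix g).mp g.2
      apply Subtype.ext
      show g0⁻¹ * diagSL _ * g0 = (g : SpecialLinearGroup (Fin 2) K)
      have key : ∀ a : Kˣ,
          (a : K) = ((g0 * (g : SpecialLinearGroup (Fin 2) K) * g0⁻¹ :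
            SpecialLinearGroup (Fin 2) K) : Matrix (Fin 2) (Fin 2) K) 0 0 →
          ((a⁻¹ : Kˣ) : K) = ((g0 * (g : SpecialLinearGroup (Fin 2) K) * g0⁻¹ :
            SpecialLinearGroup (Fin 2) K) : Matrix (Fin 2) (Fin 2) K) 1 1 →
          g0⁻¹ * diagSL a * g0 = (g : SpecialLinearGroup (Fin 2) K) := by
        intro a ha hainv
        have hdg : diagSL a = g0 * (g : SpecialLinearGroup (Fin 2) K) * g0⁻¹ := by
          apply Subtype.ext
          ext i j
          fin_cases i <;> fin_cases j
          · simpa [diagSL] using ha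
          · simpa [diagSL] using h2.2.symm
          · simpa [diagSL] using h2.1.symm
          · simpa [diagSL] using hainv
        rw [hdg]
        group
      exact key _ rfl rfl
    right_inv := by
      intro a
      apply Units.ext
      have e : g0 * (g0⁻¹ * diagSL a * g0) * g0⁻¹ = diagSL a := by group
      show ((g0 * (g0⁻¹ * diagSL a * g0) * g0⁻¹ :
        SpecialLinearGroup (Fin 2) K) : Matrix (Fin 2) (Fin 2) K) 0 0 = (a : K)
      rw [e]
      simp [diagSL]
    map_mul' := by
      intro x y
      apply Units.ext
      have e : g0 * ((x : SpecialLinearGroup (Fin 2) K) * y) * g0⁻¹ =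
          (g0 * (x : SpecialLinearGroup (Fin 2) K) * g0⁻¹) *
          (g0 * (y : SpecialLinearGroup (Fin 2) K) * g0⁻¹) := by group
      rw [Units.val_mul]
      show ((g0 * ((x * y : H) : SpecialLinearGroup (Fin 2) K) * g0⁻¹ :
        SpecialLinearGroup (Fin 2) K) : Matrix (Fin 2) (Fin 2) K) 0 0 = _
      rw [Subgroup.coe_mul, e, mul_entry00 _ _ ((hfix x).mp x.2).2] }

end Infra4
section Infra5

lemma split_normal {F : Type*} [Field F] {s : ℕ} {p : Fin s → Polynomial F} {r : Fin s → ℕ}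
    (hnu : ∀ i, ¬ IsUnit (p i ^ r i))
    {z : ∀ i, P1 (Polynomial F ⧸ Ideal.span {p i ^ r i})} (hz : SplitRational p r z)
    (i0 : Fin s) :
    ∃ a b : P1 F, a ≠ b ∧ rho F (p i0 ^ r i0) (z i0) = a ∧
      (∃ j, rho F (p j ^ r j) (z j) = b) ∧
      (∀ j, rho F (p j ^ r j) (z j) = a ∨ rho F (p j ^ r j) (z j) = b) ∧
      (∀ j, z j = P1map (constMap F (p j ^ r j)) (rho F (p j ^ r j) (z j))) := by
  obtain ⟨S, hS, hS', u, v, huv, hu, hv⟩ := hz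
  have hru : ∀ j ∈ S, rho F (p j ^ r j) (z j) = u := fun j hj => by
    rw [hu j hj, rho_map (hnu j)]
  have hrv : ∀ j ∈ Sᶜ, rho F (p j ^ r j) (z j) = v := fun j hj => by
    rw [hv j hj, rho_map (hnu j)]
  have hback : ∀ j, z j = P1map (constMap F (p j ^ r j)) (rho F (p j ^ r j) (z j)) := by
    intro j
    by_cases hj : j ∈ S
    · rw [hru j hj, hu j hj]
    · rw [hrv j hj, hv j hj]
  have hall : ∀ j, rho F (p j ^ r j) (z j) = u ∨ rho F (p j ^ r j) (z j) = v := by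
    intro j
    by_cases hj : j ∈ S
    · exact Or.inl (hru j hj)
    · exact Or.inr (hrv j hj)
  by_cases h0 : i0 ∈ S
  · exact ⟨u, v, huv, hru i0 h0, ⟨hS'.choose, hrv _ hS'.choose_spec⟩, hall, hback⟩
  · exact ⟨v, u, huv.symm, hrv i0 h0, ⟨hS.choose, hru _ hS.choose_spec⟩,
      fun j => (hall j).symm, hback⟩

lemma card_target {n : ℕ} (i0 : Fin n) :
    Nat.card {T : Set (Fin n) // i0 ∈ T ∧ T ≠ Set.univ} = 2 ^ (n - 1) - 1 := by
  have e : {T : Set (Fin n) // i0 ∈ T ∧ T ≠ Set.univ} ≃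
      {T : Set {j : Fin n // j ≠ i0} // T ≠ Set.univ} :=
  { toFun := fun T => ⟨Subtype.val ⁻¹' T.1, by
      intro hcon
      apply T.2.2
      ext x
      simp only [Set.mem_univ, iff_true]
      by_cases hx : x = i0
      · exact hx ▸ T.2.1
      · have hm : (⟨x, hx⟩ : {j : Fin n // j ≠ i0}) ∈ Subtype.val ⁻¹' T.1 := by
          rw [hcon]; trivial
        exact hm⟩,
    invFun := fun T => ⟨{x | ∀ hx : x ≠ i0, (⟨x, hx⟩ : {j : Fin n // j ≠ i0}) ∈ T.1},
      ⟨fun hx => absurd rfl hx, by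
        intro hcon
        apply T.2
        ext x
        simp only [Set.mem_univ, iff_true]
        have hm : x.1 ∈ {y | ∀ hy : y ≠ i0, (⟨y, hy⟩ : {j : Fin n // j ≠ i0}) ∈ T.1} := by
          rw [hcon]; trivial
        exact hm x.2⟩⟩,
    left_inv := by
      rintro ⟨T, hT1, hT2⟩
      apply Subtype.ext
      ext x
      simp only [Set.mem_setOf_eq, Set.mem_preimage]
      constructor
      · intro h
        by_cases hx : x = i0
        · exact hx ▸ hT1
        · exact h hx
      · intro h hx
        exact h
    right_inv := by
      rintro ⟨T, hT⟩
      apply Subtype.ext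
      ext x
      simp only [Set.mem_setOf_eq, Set.mem_preimage]
      constructor
      · intro h
        exact h x.2
      · intro h hx
        exact h }
  rw [Nat.card_congr e, card_set_ne_univ, card_subtype_ne i0, Nat.card_eq_fintype_card,
    Fintype.card_fin]

end Infra5

/-- For a point of split rational type, the stabilizer in `SL₂(Fq)`
(acting diagonally) is isomorphic to `Fqˣ`, its orbit has length `q(q+1)`, and there
are exactly `2^(s-1) - 1` orbits of such points. -/
theorem split_rational_orbits (s : ℕ) (p : Fin s → Polynomial Fq) (r : Fin s → ℕ)
    (hirr : ∀ i, Irreducible (p i)) (hmon : ∀ i, (p i).Monic) (hr : ∀ i, 1 ≤ r i)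
    (hinj : Function.Injective p) (hq : Odd (Fintype.card Fq))
    (z : ∀ i, P1 (Polynomial Fq ⧸ Ideal.span {p i ^ r i}))
    (hz : SplitRational p r z) :
    Nonempty ((↥(⨅ i, stabSub (SpecialLinearGroup.map (constMap Fq (p i ^ r i))) (z i) :
      Subgroup (SpecialLinearGroup (Fin 2) Fq))) ≃* Fqˣ) ∧
    Nat.card {w : ∀ i, P1 (Polynomial Fq ⧸ Ideal.span {p i ^ r i}) |
        ∃ g : SpecialLinearGroup (Fin 2) Fq, ∀ i,
          actP1 (SpecialLinearGroup.map (constMap Fq (p i ^ r i)) g) (z i) = w i} =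
      Fintype.card Fq * (Fintype.card Fq + 1) ∧
    Nat.card (Quot (fun z w : {z : ∀ i, P1 (Polynomial Fq ⧸ Ideal.span {p i ^ r i}) //
        SplitRational p r z} =>
        ∃ g : SpecialLinearGroup (Fin 2) Fq, ∀ i,
          actP1 (SpecialLinearGroup.map (constMap Fq (p i ^ r i)) g) (z.1 i) = w.1 i)) =
      2 ^ (s - 1) - 1 := by
  classical
  have hnu : ∀ i, ¬ IsUnit (p i ^ r i) := by
    intro i hui
    exact (hirr i).not_isUnit (isUnit_of_dvd_unit
      (dvd_pow_self (p i) (Nat.one_le_iff_ne_zero.mp (hr i))) hui)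
  obtain ⟨S, hS, hSc, u, v, huv, hzS, hzSc⟩ := hz
  obtain ⟨g0, hg0u, hg0v⟩ := exists_to_infzero huv
  have hinjP : ∀ i, Function.Injective
      (P1map (constMap Fq (p i ^ r i)) : P1 Fq → P1 (Polynomial Fq ⧸ Ideal.span {p i ^ r i})) :=
    fun i => P1map_constMap_injective (hnu i)
  have key : ∀ g : SpecialLinearGroup (Fin 2) Fq,
      (g ∈ ⨅ i, stabSub (SpecialLinearGroup.map (constMap Fq (p i ^ r i))) (z i)) ↔
      (actP1 g u = u ∧ actP1 g v = v) := by
    intro g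
    rw [Subgroup.mem_iInf]
    constructor
    · intro h
      obtain ⟨i, hi⟩ := hS
      obtain ⟨j, hj⟩ := hSc
      have h1 := h i
      rw [mem_stabSub, hzS i hi, actP1_map_comm] at h1
      have h2 := h j
      rw [mem_stabSub, hzSc j hj, actP1_map_comm] at h2
      exact ⟨hinjP i h1, hinjP j h2⟩
    · rintro ⟨h1, h2⟩ i
      rw [mem_stabSub]
      by_cases hi : i ∈ S
      · rw [hzS i hi, actP1_map_comm, h1]
      · rw [hzSc i hi, actP1_map_comm, h2]
  refine ⟨⟨stabEquivUnits _ g0 hg0u hg0v key⟩, ?_, ?_⟩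
  · -- orbit size
    obtain ⟨i0, hi0⟩ := hS
    obtain ⟨j0, hj0⟩ := hSc
    have hval : ∀ w : {w : ∀ i, P1 (Polynomial Fq ⧸ Ideal.span {p i ^ r i}) |
        ∃ g : SpecialLinearGroup (Fin 2) Fq, ∀ i,
          actP1 (SpecialLinearGroup.map (constMap Fq (p i ^ r i)) g) (z i) = w i},
        ∃ g : SpecialLinearGroup (Fin 2) Fq,
          rho Fq (p i0 ^ r i0) (w.1 i0) = actP1 g u ∧
          rho Fq (p j0 ^ r j0) (w.1 j0) = actP1 g v ∧
          (∀ i, w.1 i = P1map (constMap Fq (p i ^ r i))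
            (actP1 g (if i ∈ S then u else v))) := by
      intro w
      obtain ⟨g, hg⟩ := w.2
      refine ⟨g, ?_, ?_, ?_⟩
      · rw [← hg i0, hzS i0 hi0, actP1_map_comm, rho_map (hnu i0)]
      · rw [← hg j0, hzSc j0 hj0, actP1_map_comm, rho_map (hnu j0)]
      · intro i
        by_cases hi : i ∈ S
        · rw [if_pos hi, ← hg i, hzS i hi, actP1_map_comm]
        · rw [if_neg hi, ← hg i, hzSc i hi, actP1_map_comm]
    set F : {w : ∀ i, P1 (Polynomial Fq ⧸ Ideal.span {p i ^ r i}) |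
        ∃ g : SpecialLinearGroup (Fin 2) Fq, ∀ i,
          actP1 (SpecialLinearGroup.map (constMap Fq (p i ^ r i)) g) (z i) = w i} →
        {q : P1 Fq × P1 Fq // q.1 ≠ q.2} := fun w =>
      ⟨(rho Fq (p i0 ^ r i0) (w.1 i0), rho Fq (p j0 ^ r j0) (w.1 j0)), by
        obtain ⟨g, h1, h2, h3⟩ := hval w
        simp only
        rw [h1, h2]
        exact fun hc => huv (actP1_injective g hc)⟩ with hF
    have hFbij : Function.Bijective F := by
      constructor
      · intro w w' hww
        obtain ⟨g, h1, h2, h3⟩ := hval w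
        obtain ⟨g', h1', h2', h3'⟩ := hval w'
        rw [hF] at hww
        have hpair := congrArg Subtype.val hww
        simp only [Prod.mk.injEq] at hpair
        have e1 : actP1 g u = actP1 g' u := by rw [← h1, ← h1']; exact hpair.1
        have e2 : actP1 g v = actP1 g' v := by rw [← h2, ← h2']; exact hpair.2
        apply Subtype.ext
        funext i
        rw [h3 i, h3' i]
        by_cases hi : i ∈ S
        · rw [if_pos hi, e1]
        · rw [if_neg hi, e2]
      · rintro ⟨⟨x, y⟩, hxy⟩
        obtain ⟨g, hgu, hgv⟩ := exists_pair_trans huv hxy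
        refine ⟨⟨fun i => actP1 (SpecialLinearGroup.map (constMap Fq (p i ^ r i)) g) (z i),
          ⟨g, fun i => rfl⟩⟩, ?_⟩
        apply Subtype.ext
        have e1 : actP1 (SpecialLinearGroup.map (constMap Fq (p i0 ^ r i0)) g) (z i0) =
            P1map (constMap Fq (p i0 ^ r i0)) x := by
          rw [hzS i0 hi0, actP1_map_comm, hgu]
        have e2 : actP1 (SpecialLinearGroup.map (constMap Fq (p j0 ^ r j0)) g) (z j0) =
            P1map (constMap Fq (p j0 ^ r j0)) y := by
          rw [hzSc j0 hj0, actP1_map_comm, hgv]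
        show (rho Fq (p i0 ^ r i0)
            (actP1 (SpecialLinearGroup.map (constMap Fq (p i0 ^ r i0)) g) (z i0)),
          rho Fq (p j0 ^ r j0)
            (actP1 (SpecialLinearGroup.map (constMap Fq (p j0 ^ r j0)) g) (z j0))) = (x, y)
        rw [Prod.mk.injEq]
        exact ⟨by rw [e1, rho_map (hnu i0)], by rw [e2, rho_map (hnu j0)]⟩
    rw [Nat.card_eq_of_bijective F hFbij, card_ne_pairs, card_P1]
    have harith : (Fintype.card Fq + 1) * (Fintype.card Fq + 1) =
        Fintype.card Fq * (Fintype.card Fq + 1) + (Fintype.card Fq + 1) := by ring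
    rw [harith, Nat.add_sub_cancel]
  · -- number of orbits
    obtain ⟨i0, hi0⟩ := hS
    set Φ : {z' : ∀ i, P1 (Polynomial Fq ⧸ Ideal.span {p i ^ r i}) // SplitRational p r z'} →
        Set (Fin s) := fun z' =>
      {j | rho Fq (p j ^ r j) (z'.1 j) = rho Fq (p i0 ^ r i0) (z'.1 i0)} with hΦ
    have hΦspec : ∀ z', i0 ∈ Φ z' ∧ Φ z' ≠ Set.univ := by
      intro z'
      obtain ⟨a, b, hab, ha, ⟨j, hj⟩, hall, hback⟩ := split_normal hnu z'.2 i0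
      refine ⟨rfl, fun hcon => ?_⟩
      have hm : j ∈ Φ z' := by rw [hcon]; trivial
      rw [hΦ] at hm
      have hm2 : rho Fq (p j ^ r j) (z'.1 j) = rho Fq (p i0 ^ r i0) (z'.1 i0) := hm
      rw [hj, ha] at hm2
      exact hab hm2.symm
    have hinv : ∀ z1 z2 : {z' : ∀ i, P1 (Polynomial Fq ⧸ Ideal.span {p i ^ r i}) //
        SplitRational p r z'},
        (∃ g : SpecialLinearGroup (Fin 2) Fq, ∀ i,
          actP1 (SpecialLinearGroup.map (constMap Fq (p i ^ r i)) g) (z1.1 i) = z2.1 i) →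
        Φ z1 = Φ z2 := by
      rintro z1 z2 ⟨g, hg⟩
      obtain ⟨a, b, hab, ha, hb, hall, hback⟩ := split_normal hnu z1.2 i0
      have hr2 : ∀ j, rho Fq (p j ^ r j) (z2.1 j) =
          actP1 g (rho Fq (p j ^ r j) (z1.1 j)) := by
        intro j
        rw [← hg j]
        conv_lhs => rw [hback j]
        rw [actP1_map_comm, rho_map (hnu j)]
      ext j
      simp only [hΦ, Set.mem_setOf_eq, hr2]
      exact ⟨fun h => by rw [h], fun h => actP1_injective g h⟩
    set Ψ : Quot (fun z w : {z : ∀ i, P1 (Polynomial Fq ⧸ Ideal.span {p i ^ r i}) //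
        SplitRational p r z} =>
        ∃ g : SpecialLinearGroup (Fin 2) Fq, ∀ i,
          actP1 (SpecialLinearGroup.map (constMap Fq (p i ^ r i)) g) (z.1 i) = w.1 i) →
        {T : Set (Fin s) // i0 ∈ T ∧ T ≠ Set.univ} :=
      Quot.lift (fun z' => ⟨Φ z', hΦspec z'⟩)
        (fun z1 z2 h => Subtype.ext (hinv z1 z2 h)) with hΨ
    have hΨbij : Function.Bijective Ψ := by
      constructor
      · intro x y
        induction x using Quot.ind with | _ z1 =>
        induction y using Quot.ind with | _ z2 =>
        intro hxy
        rw [hΨ] at hxy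
        have hT : Φ z1 = Φ z2 := congrArg Subtype.val hxy
        obtain ⟨a1, b1, hab1, ha1, hb1, hall1, hback1⟩ := split_normal hnu z1.2 i0
        obtain ⟨a2, b2, hab2, ha2, hb2, hall2, hback2⟩ := split_normal hnu z2.2 i0
        have m1 : ∀ i, i ∈ Φ z1 ↔ rho Fq (p i ^ r i) (z1.1 i) = a1 := by
          intro i
          rw [hΦ]
          exact Iff.intro (fun h => Eq.trans h ha1) (fun h => Eq.trans h ha1.symm)
        have m2 : ∀ i, i ∈ Φ z2 ↔ rho Fq (p i ^ r i) (z2.1 i) = a2 := by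
          intro i
          rw [hΦ]
          exact Iff.intro (fun h => Eq.trans h ha2) (fun h => Eq.trans h ha2.symm)
        obtain ⟨g, hga, hgb⟩ := exists_pair_trans hab1 hab2
        apply Quot.sound
        refine ⟨g, fun i => ?_⟩
        conv_lhs => rw [hback1 i]
        rw [actP1_map_comm]
        conv_rhs => rw [hback2 i]
        congr 1
        by_cases hi : i ∈ Φ z1
        · rw [(m1 i).mp hi, hga, (m2 i).mp ((Set.ext_iff.mp hT i).mp hi)]
        · have h1 : rho Fq (p i ^ r i) (z1.1 i) = b1 :=
            (hall1 i).resolve_left (fun hc => hi ((m1 i).mpr hc))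
          have hi2 : i ∉ Φ z2 := fun hc => hi ((Set.ext_iff.mp hT i).mpr hc)
          have h2 : rho Fq (p i ^ r i) (z2.1 i) = b2 :=
            (hall2 i).resolve_left (fun hc => hi2 ((m2 i).mpr hc))
          rw [h1, hgb, h2]
      · rintro ⟨T, hTi0, hTne⟩
        obtain ⟨j1, hj1⟩ := (Set.ne_univ_iff_exists_notMem T).mp hTne
        set zT : ∀ i, P1 (Polynomial Fq ⧸ Ideal.span {p i ^ r i}) := fun i =>
          P1map (constMap Fq (p i ^ r i)) (if i ∈ T then P1inf Fq else P1zero Fq) with hzT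
        have hsplit : SplitRational p r zT :=
          ⟨T, ⟨i0, hTi0⟩, ⟨j1, hj1⟩, P1inf Fq, P1zero Fq, P1inf_ne_zero,
            fun i hi => by rw [hzT]; simp only; rw [if_pos hi],
            fun i hi => by rw [hzT]; simp only; rw [if_neg hi]⟩
        refine ⟨Quot.mk _ ⟨zT, hsplit⟩, ?_⟩
        rw [hΨ]
        apply Subtype.ext
        show Φ ⟨zT, hsplit⟩ = T
        have hrT : ∀ i, rho Fq (p i ^ r i) (zT i) = (if i ∈ T then P1inf Fq else P1zero Fq) :=
          fun i => rho_map (hnu i) _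
        ext j
        rw [hΦ]
        simp only [Set.mem_setOf_eq, hrT, if_pos hTi0]
        by_cases hj : j ∈ T
        · simp [hj]
        · simp [hj, (P1inf_ne_zero (K := Fq)).symm]
    rw [Nat.card_eq_of_bijective Ψ hΨbij, card_target]
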